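/- Let q1, q2 ∈ ℝ[u] each have degree exactly m ≥ 1. Then the Bézout matrix B_m(q1,q2) is definite (positive definite or negative definite) if and only if all roots of q1 and of q2 are real and simple, q1 and q2 have no common root, and the roots of q1 and q2 strictly interlace, i.e., when the m roots of q1 and the m roots of q2 are listed together in increasing order they alternate between roots of q1 and roots of q2. -/

import Mathlib

/-- The Bézout matrix `B_m(g,h)` of two univariate polynomials of degree at most `m`:
the `m × m` symmetric matrix `(b_{kl})` determined by
`g(u)h(v) − g(v)h(u) = (u − v) ∑_{k,l=0}^{m−1} b_{kl} u^k v^l`. Working in `R[v][u]`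
(outer variable `u`, inner variable `v`), `u − v` is the monic polynomial `X − C X`, and
`b_{kl}` is the coefficient of `u^k v^l` of the exact quotient. -/
noncomputable def bezoutMatrix (R : Type*) [CommRing R] (m : ℕ) (g h : Polynomial R) :
    Matrix (Fin m) (Fin m) R :=
  Matrix.of fun k l : Fin m =>
    (((g.map (Polynomial.C : R →+* Polynomial R) * Polynomial.C h -
        Polynomial.C g * h.map (Polynomial.C : R →+* Polynomial R)) /ₘ
      (Polynomial.X - Polynomial.C Polynomial.X)).coeff (k : ℕ)).coeff (l : ℕ)

namespace BezAux

open Polynomial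

variable {R : Type*} [CommRing R]

/-- The Bézout numerator `g(u)h(v) - g(v)h(u)` in `R[v][u]`. -/
noncomputable def bezNum (g h : R[X]) : (R[X])[X] :=
  g.map (C : R →+* R[X]) * C h - C g * h.map (C : R →+* R[X])

/-- The Bézoutian polynomial: exact quotient of `bezNum` by `u - v`. -/
noncomputable def bezQ (g h : R[X]) : (R[X])[X] :=
  bezNum g h /ₘ (X - C X)

lemma bezoutMatrix_apply (m : ℕ) (g h : R[X]) (k l : Fin m) :
    bezoutMatrix R m g h k l = ((bezQ g h).coeff (k : ℕ)).coeff (l : ℕ) := rfl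

lemma eval_X_bezNum (g h : R[X]) : (bezNum g h).eval (X : R[X]) = 0 := by
  simp [bezNum, eval_map, eval₂_C_X, mul_comm]

lemma bezNum_eq (g h : R[X]) : bezNum g h = (X - C X) * bezQ g h := by
  have h1 := modByMonic_add_div (bezNum g h) (X - C (X : R[X]))
  rw [modByMonic_X_sub_C_eq_C_eval, eval_X_bezNum, map_zero, zero_add] at h1
  exact h1.symm

lemma natDegree_bezNum_le {m : ℕ} {g h : R[X]} (hg : g.natDegree ≤ m) (hh : h.natDegree ≤ m) :
    (bezNum g h).natDegree ≤ m := by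
  refine le_trans (natDegree_sub_le _ _) (max_le ?_ ?_)
  · refine le_trans (natDegree_mul_le) ?_
    simpa using le_trans (natDegree_map_le) hg
  · refine le_trans (natDegree_mul_le) ?_
    simpa using le_trans (natDegree_map_le) hh

lemma natDegree_bezQ_lt [Nontrivial R] {m : ℕ} (hm : 1 ≤ m) {g h : R[X]} (hg : g.natDegree ≤ m)
    (hh : h.natDegree ≤ m) : (bezQ g h).natDegree < m := by
  have := natDegree_divByMonic (bezNum g h) (monic_X_sub_C (X : R[X]))
  rw [natDegree_X_sub_C] at this
  have h2 := natDegree_bezNum_le hg hh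
  unfold bezQ
  omega

lemma coeff_bezQ_eq_zero [Nontrivial R] {m : ℕ} (hm : 1 ≤ m) {g h : R[X]} (hg : g.natDegree ≤ m)
    (hh : h.natDegree ≤ m) {k : ℕ} (hk : m ≤ k) : (bezQ g h).coeff k = 0 :=
  coeff_eq_zero_of_natDegree_lt (lt_of_lt_of_le (natDegree_bezQ_lt hm hg hh) hk)

/-- The swap homomorphism on `R[v][u]` exchanging the two variables. -/
noncomputable def swapHom : (R[X])[X] →+* (R[X])[X] :=
  eval₂RingHom (eval₂RingHom ((C : R[X] →+* (R[X])[X]).comp (C : R →+* R[X]))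
    (X : (R[X])[X])) (C X)

lemma swapHom_monomial (n j : ℕ) (r : R) :
    swapHom (monomial n (monomial j r)) = monomial j (monomial n r) := by
  simp only [swapHom, coe_eval₂RingHom, eval₂_monomial, RingHom.coe_comp, Function.comp_apply]
  rw [← C_mul_X_pow_eq_monomial, ← C_mul_X_pow_eq_monomial, ← C_pow, map_mul]
  ring

lemma coeff_coeff_swapHom (p : (R[X])[X]) (k l : ℕ) :
    ((swapHom p).coeff k).coeff l = ((p.coeff l).coeff k) := by
  induction p using Polynomial.induction_on' with
  | add p q hp hq => simp [hp, hq]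
  | monomial n a =>
    induction a using Polynomial.induction_on' with
    | add a b ha hb =>
      have : (monomial n (a + b) : (R[X])[X]) = monomial n a + monomial n b := by
        rw [map_add]
      simp only [this, map_add, coeff_add, ha, hb]
    | monomial j r =>
      rw [swapHom_monomial]
      by_cases h1 : j = k <;> by_cases h2 : n = l <;>
        simp [coeff_monomial, h1, h2]

lemma swapHom_mapC (g : R[X]) : swapHom (g.map (C : R →+* R[X])) = C g := by
  have h1 : (swapHom.comp (mapRingHom (C : R →+* R[X]))) = (C : R[X] →+* (R[X])[X]) := by
    apply Polynomial.ringHom_ext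
    · intro r
      simp [swapHom]
    · simp [swapHom]
  exact congrFun (congrArg (fun f => f.toFun) h1) g

lemma swapHom_C (g : R[X]) : swapHom (C g) = g.map (C : R →+* R[X]) := by
  have h1 : (swapHom.comp (C : R[X] →+* (R[X])[X])) = mapRingHom (C : R →+* R[X]) := by
    apply Polynomial.ringHom_ext
    · intro r
      simp [swapHom]
    · simp [swapHom]
  exact congrFun (congrArg (fun f => f.toFun) h1) g

lemma swapHom_bezNum (g h : R[X]) : swapHom (bezNum g h) = - bezNum g h := by
  simp only [bezNum, map_sub, map_mul, swapHom_mapC, swapHom_C]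
  ring

lemma swapHom_XsubCX : swapHom (X - C (X : R[X])) = - (X - C X) := by
  have h1 : swapHom (X : (R[X])[X]) = C X := by simp [swapHom]
  rw [map_sub, swapHom_C, h1, map_X]
  ring

lemma bezQ_symm [IsDomain R] (g h : R[X]) : swapHom (bezQ g h) = bezQ g h := by
  have h1 := congrArg swapHom (bezNum_eq g h)
  rw [swapHom_bezNum, map_mul, swapHom_XsubCX] at h1
  have h2 : (X - C (X : R[X])) * bezQ g h = (X - C X) * swapHom (bezQ g h) := by
    rw [← bezNum_eq]
    linear_combination -h1
  exact (mul_left_cancel₀ (monic_X_sub_C (X : R[X])).ne_zero h2).symm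


lemma coeff_coeff_bezQ_symm [IsDomain R] (g h : R[X]) (k l : ℕ) :
    ((bezQ g h).coeff k).coeff l = ((bezQ g h).coeff l).coeff k := by
  conv_lhs => rw [← bezQ_symm g h]
  rw [coeff_coeff_swapHom]

lemma bezoutMatrix_symm [IsDomain R] (m : ℕ) (g h : R[X]) (k l : Fin m) :
    bezoutMatrix R m g h k l = bezoutMatrix R m g h l k := by
  rw [bezoutMatrix_apply, bezoutMatrix_apply, coeff_coeff_bezQ_symm]

lemma coeff_coeff_bezQ_eq_zero [IsDomain R] {m : ℕ} (hm : 1 ≤ m) {g h : R[X]}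
    (hg : g.natDegree ≤ m) (hh : h.natDegree ≤ m) {k l : ℕ} (hl : m ≤ l) :
    ((bezQ g h).coeff k).coeff l = 0 := by
  rw [coeff_coeff_bezQ_symm, coeff_bezQ_eq_zero hm hg hh hl, coeff_zero]

lemma natDegree_coeff_bezQ_lt [IsDomain R] {m : ℕ} (hm : 1 ≤ m) {g h : R[X]}
    (hg : g.natDegree ≤ m) (hh : h.natDegree ≤ m) (k : ℕ) :
    ((bezQ g h).coeff k).natDegree < m := by
  by_contra hcon
  push_neg at hcon
  rcases eq_or_ne ((bezQ g h).coeff k) 0 with h0 | h0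
  · rw [h0] at hcon
    simp at hcon
    omega
  · exact (leadingCoeff_ne_zero.mpr h0)
      (coeff_coeff_bezQ_eq_zero hm hg hh hcon)

/-- Double sum expression for the evaluated Bézoutian. -/
lemma sum_bez_eq_eval₂ [IsDomain R] {m : ℕ} (hm : 1 ≤ m) {g h : R[X]}
    (hg : g.natDegree ≤ m) (hh : h.natDegree ≤ m) (x y : R) :
    (∑ k : Fin m, ∑ l : Fin m,
        bezoutMatrix R m g h k l * x ^ (k : ℕ) * y ^ (l : ℕ)) =
      eval₂ (evalRingHom y) x (bezQ g h) := by
  rw [eval₂_eq_sum_range' (evalRingHom y) (natDegree_bezQ_lt hm hg hh) x]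
  rw [← Fin.sum_univ_eq_sum_range (fun i => (evalRingHom y) ((bezQ g h).coeff i) * x ^ i) m]
  refine Finset.sum_congr rfl fun k _ => ?_
  rw [coe_evalRingHom, eval_eq_sum_range' (natDegree_coeff_bezQ_lt hm hg hh (k : ℕ)) y,
    ← Fin.sum_univ_eq_sum_range (fun l => ((bezQ g h).coeff (k:ℕ)).coeff l * y ^ l) m,
    Finset.sum_mul]
  refine Finset.sum_congr rfl fun l _ => ?_
  rw [bezoutMatrix_apply]
  ring

lemma eval₂_bezNum (g h : R[X]) (x y : R) :
    eval₂ (evalRingHom y) x (bezNum g h) =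
      g.eval x * h.eval y - g.eval y * h.eval x := by
  have hC : (evalRingHom y).comp (C : R →+* R[X]) = RingHom.id R := by
    ext r; simp
  have hid : ∀ p : R[X], eval₂ (RingHom.id R) x p = p.eval x := fun p => rfl
  simp only [bezNum, eval₂_sub, eval₂_mul, eval₂_C, eval₂_map, hC, coe_evalRingHom, hid]

lemma eval₂_XsubCX (x y : R) :
    eval₂ (evalRingHom y) x (X - C (X : R[X])) = x - y := by
  simp

/-- The key quadratic form identity. -/
lemma quadform [IsDomain R] {m : ℕ} (hm : 1 ≤ m) {g h : R[X]}
    (hg : g.natDegree ≤ m) (hh : h.natDegree ≤ m) (x y : R) :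
    (∑ k : Fin m, ∑ l : Fin m,
        bezoutMatrix R m g h k l * x ^ (k : ℕ) * y ^ (l : ℕ)) * (x - y) =
      g.eval x * h.eval y - g.eval y * h.eval x := by
  rw [sum_bez_eq_eval₂ hm hg hh, ← eval₂_bezNum g h x y, bezNum_eq g h, eval₂_mul,
    eval₂_XsubCX, mul_comm]

lemma eval_X_bezQ (g h : R[X]) :
    (bezQ g h).eval (X : R[X]) = g.derivative * h - g * h.derivative := by
  have h1 := congrArg derivative (bezNum_eq g h)
  rw [derivative_mul] at h1
  have h2 : derivative (X - C (X : R[X])) = 1 := by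
    rw [derivative_sub, derivative_X, derivative_C, sub_zero]
  rw [h2, one_mul] at h1
  have h3 := congrArg (eval (X : R[X])) h1
  rw [eval_add, eval_mul, eval_sub, eval_X, eval_C, sub_self, zero_mul, add_zero] at h3
  rw [← h3]
  have h4 : derivative (bezNum g h) =
      (derivative g).map (C : R →+* R[X]) * C h - C g * (derivative h).map C := by
    simp only [bezNum, derivative_sub, derivative_mul, derivative_C, mul_zero, zero_mul,
      add_zero, zero_add, derivative_map]
  rw [h4, eval_sub, eval_mul, eval_mul, eval_C, eval_C, eval_map, eval_map, eval₂_C_X,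
    eval₂_C_X]

/-- The diagonal identity. -/
lemma diagform [IsDomain R] {m : ℕ} (hm : 1 ≤ m) {g h : R[X]}
    (hg : g.natDegree ≤ m) (hh : h.natDegree ≤ m) (y : R) :
    (∑ k : Fin m, ∑ l : Fin m,
        bezoutMatrix R m g h k l * y ^ (k : ℕ) * y ^ (l : ℕ)) =
      g.derivative.eval y * h.eval y - g.eval y * h.derivative.eval y := by
  rw [sum_bez_eq_eval₂ hm hg hh]
  have h1 : ((bezQ g h).eval (X : R[X])).eval y = eval₂ (evalRingHom y) y (bezQ g h) := by
    have h0 : ((bezQ g h).eval (X : R[X])).eval y =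
        (evalRingHom y) (eval₂ (RingHom.id R[X]) (X : R[X]) (bezQ g h)) := rfl
    rw [h0, hom_eval₂]
    simp
  rw [← h1, eval_X_bezQ, eval_sub, eval_mul, eval_mul]

/-- `bezoutMatrix` commutes with base change. -/
lemma bezoutMatrix_map {S : Type*} [CommRing S] (f : R →+* S) (m : ℕ) (g h : R[X])
    (k l : Fin m) :
    bezoutMatrix S m (g.map f) (h.map f) k l = f (bezoutMatrix R m g h k l) := by
  have hnum : bezNum (g.map f) (h.map f) = (bezNum g h).map (mapRingHom f) := by
    simp only [bezNum, Polynomial.map_sub, Polynomial.map_mul, map_C, coe_mapRingHom,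
      map_map]
    have : (mapRingHom f).comp (C : R →+* R[X]) = (C : S →+* S[X]).comp f := by
      ext r; simp
    rw [this, ← map_map]
  have hq : bezQ (g.map f) (h.map f) = (bezQ g h).map (mapRingHom f) := by
    rw [bezQ, bezQ, hnum, map_divByMonic (mapRingHom f) (monic_X_sub_C (X : R[X]))]
    congr 1
    simp
  rw [bezoutMatrix_apply, bezoutMatrix_apply, hq]
  simp [coe_mapRingHom, coeff_map]

end BezAux

section RealPart

open Polynomial BezAux Matrix Finset

/-- Congruence preserves positive definiteness (real case). -/
lemma posdef_of_mul_mul_transpose {n : Type*} [Fintype n] [DecidableEq n]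
    {A W : Matrix n n ℝ} (hW : IsUnit W.det) (h : (W * A * Wᵀ).PosDef)
    (hA : A.IsHermitian) : A.PosDef := by
  refine Matrix.PosDef.of_dotProduct_mulVec_pos hA fun x hx => ?_
  set c := (Wᵀ)⁻¹ *ᵥ x with hc
  have hWdet : IsUnit (Wᵀ).det := by rwa [Matrix.det_transpose]
  have hx' : Wᵀ *ᵥ c = x := by
    rw [hc, Matrix.mulVec_mulVec, Matrix.mul_nonsing_inv _ hWdet, Matrix.one_mulVec]
  have hcne : c ≠ 0 := fun h0 => hx (by rw [← hx', h0, Matrix.mulVec_zero])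
  have h2 := h.dotProduct_mulVec_pos hcne
  have hstar : ∀ v : n → ℝ, star v = v := fun v => funext fun i => rfl
  rw [hstar] at h2 ⊢
  have key : c ⬝ᵥ (W * A * Wᵀ) *ᵥ c = (Wᵀ *ᵥ c) ⬝ᵥ A *ᵥ (Wᵀ *ᵥ c) := by
    simp only [Matrix.dotProduct_mulVec, Matrix.vecMul_vecMul, Matrix.mulVec_transpose]
    rw [← Matrix.vecMul_vecMul, Matrix.vecMul_transpose, dotProduct_comm,
      Matrix.dotProduct_mulVec]
    exact dotProduct_comm _ _
  rw [key, hx'] at h2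
  exact h2

lemma dot_gen {m : ℕ} (B : Matrix (Fin m) (Fin m) ℝ) (u v : Fin m → ℝ) :
    u ⬝ᵥ B *ᵥ v = ∑ k : Fin m, ∑ l : Fin m, B k l * u k * v l := by
  simp only [dotProduct, Matrix.mulVec, dotProduct, Finset.mul_sum]
  refine Finset.sum_congr rfl fun k _ => Finset.sum_congr rfl fun l _ => by ring

lemma dot_pow {m : ℕ} (B : Matrix (Fin m) (Fin m) ℝ) (x y : ℝ) :
    (fun k : Fin m => x ^ (k : ℕ)) ⬝ᵥ B *ᵥ (fun l : Fin m => y ^ (l : ℕ)) =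
      ∑ k : Fin m, ∑ l : Fin m, B k l * x ^ (k : ℕ) * y ^ (l : ℕ) :=
  dot_gen B _ _

lemma pow_vec_ne_zero {m : ℕ} (hm : 1 ≤ m) (x : ℝ) :
    (fun k : Fin m => x ^ (k : ℕ)) ≠ 0 := by
  intro h
  have := congrFun h ⟨0, hm⟩
  simp at this


/-- conjugate of a root of a real polynomial (mapped to `ℂ`) is a root. -/
lemma conj_eval_map (p : Polynomial ℝ) (z : ℂ) :
    (p.map (algebraMap ℝ ℂ)).eval ((starRingEnd ℂ) z) =
      (starRingEnd ℂ) ((p.map (algebraMap ℝ ℂ)).eval z) := by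
  rw [eval_map, eval_map, hom_eval₂]
  congr 1
  ext r
  simp

section Main

variable {m : ℕ} {q1 q2 : Polynomial ℝ}

/-- The diagonal Bézoutian value. -/
noncomputable def Dq (q1 q2 : Polynomial ℝ) (x : ℝ) : ℝ :=
  q1.derivative.eval x * q2.eval x - q1.eval x * q2.derivative.eval x

lemma bez_isHermitian : (bezoutMatrix ℝ m q1 q2).IsHermitian := by
  ext i j
  simp only [Matrix.conjTranspose_apply, RCLike.star_def, starRingEnd_apply, star_trivial]
  exact bezoutMatrix_symm m q1 q2 j i

lemma neg_bez_isHermitian : (-(bezoutMatrix ℝ m q1 q2)).IsHermitian :=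
  Matrix.IsHermitian.neg bez_isHermitian

lemma diag_dot (hm : 1 ≤ m) (hq1 : q1.natDegree ≤ m) (hq2 : q2.natDegree ≤ m) (x : ℝ) :
    (fun k : Fin m => x ^ (k : ℕ)) ⬝ᵥ (bezoutMatrix ℝ m q1 q2) *ᵥ
      (fun l : Fin m => x ^ (l : ℕ)) = Dq q1 q2 x := by
  rw [dot_pow, diagform hm hq1 hq2 x]
  rfl

/-- Definiteness forces the diagonal Bézoutian values to have constant strict sign. -/
lemma diag_sign (hm : 1 ≤ m) (hq1 : q1.natDegree ≤ m) (hq2 : q2.natDegree ≤ m)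
    (hdef : (bezoutMatrix ℝ m q1 q2).PosDef ∨ (-(bezoutMatrix ℝ m q1 q2)).PosDef) :
    (∀ x, 0 < Dq q1 q2 x) ∨ (∀ x, Dq q1 q2 x < 0) := by
  rcases hdef with hd | hd
  · left
    intro x
    have := hd.dotProduct_mulVec_pos (pow_vec_ne_zero hm x)
    rwa [star_trivial, diag_dot hm hq1 hq2] at this
  · right
    intro x
    have := hd.dotProduct_mulVec_pos (pow_vec_ne_zero hm x)
    rw [star_trivial, Matrix.neg_mulVec, dotProduct_neg,
      diag_dot hm hq1 hq2] at this
    linarith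

lemma diag_ne_zero (hm : 1 ≤ m) (hq1 : q1.natDegree ≤ m) (hq2 : q2.natDegree ≤ m)
    (hdef : (bezoutMatrix ℝ m q1 q2).PosDef ∨ (-(bezoutMatrix ℝ m q1 q2)).PosDef)
    (x : ℝ) : Dq q1 q2 x ≠ 0 := by
  rcases diag_sign hm hq1 hq2 hdef with h | h
  · exact (h x).ne'
  · exact (h x).ne

lemma diag_mul_pos (hm : 1 ≤ m) (hq1 : q1.natDegree ≤ m) (hq2 : q2.natDegree ≤ m)
    (hdef : (bezoutMatrix ℝ m q1 q2).PosDef ∨ (-(bezoutMatrix ℝ m q1 q2)).PosDef)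
    (x z : ℝ) : 0 < Dq q1 q2 x * Dq q1 q2 z := by
  rcases diag_sign hm hq1 hq2 hdef with h | h
  · exact mul_pos (h x) (h z)
  · exact mul_pos_of_neg_of_neg (h x) (h z)


lemma im_eq_zero (hm : 1 ≤ m) (hq1 : q1.natDegree ≤ m) (hq2 : q2.natDegree ≤ m)
    (hdef : (bezoutMatrix ℝ m q1 q2).PosDef ∨ (-(bezoutMatrix ℝ m q1 q2)).PosDef)
    (z : ℂ)
    (h0 : (q1.map (algebraMap ℝ ℂ)).eval z *
        (q2.map (algebraMap ℝ ℂ)).eval ((starRingEnd ℂ) z) -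
      (q1.map (algebraMap ℝ ℂ)).eval ((starRingEnd ℂ) z) *
        (q2.map (algebraMap ℝ ℂ)).eval z = 0) :
    z.im = 0 := by
  by_contra him
  have hzz : z - (starRingEnd ℂ) z ≠ 0 := by
    rw [sub_ne_zero]
    intro h
    exact him (Complex.conj_eq_iff_im.mp h.symm)
  have hq1c : (q1.map (algebraMap ℝ ℂ)).natDegree ≤ m := le_trans (natDegree_map_le) hq1
  have hq2c : (q2.map (algebraMap ℝ ℂ)).natDegree ≤ m := le_trans (natDegree_map_le) hq2
  have hq := quadform (R := ℂ) hm hq1c hq2c z ((starRingEnd ℂ) z)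
  rw [h0, mul_eq_zero] at hq
  have hS : (∑ k : Fin m, ∑ l : Fin m,
      bezoutMatrix ℂ m (q1.map (algebraMap ℝ ℂ)) (q2.map (algebraMap ℝ ℂ)) k l *
        z ^ (k : ℕ) * ((starRingEnd ℂ) z) ^ (l : ℕ)) = 0 := hq.resolve_right hzz
  -- take real parts
  have hre : (0 : ℝ) = ∑ k : Fin m, ∑ l : Fin m, bezoutMatrix ℝ m q1 q2 k l *
      ((z ^ (k : ℕ)).re * (z ^ (l : ℕ)).re + (z ^ (k : ℕ)).im * (z ^ (l : ℕ)).im) := by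
    have hc := congrArg Complex.re hS
    rw [Complex.re_sum] at hc
    simp only [Complex.zero_re] at hc
    rw [← hc]
    refine Finset.sum_congr rfl fun k _ => ?_
    rw [Complex.re_sum]
    refine Finset.sum_congr rfl fun l _ => ?_
    rw [bezoutMatrix_map (algebraMap ℝ ℂ) m q1 q2 k l, ← map_pow (starRingEnd ℂ) z (l : ℕ),
      mul_assoc]
    simp only [Complex.coe_algebraMap, Complex.mul_re, Complex.ofReal_re, Complex.ofReal_im,
      Complex.conj_re, Complex.conj_im, zero_mul, sub_zero]
    ring
  have hsum : ((fun k : Fin m => (z ^ (k : ℕ)).re) ⬝ᵥ (bezoutMatrix ℝ m q1 q2) *ᵥ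
        (fun l : Fin m => (z ^ (l : ℕ)).re)) +
      ((fun k : Fin m => (z ^ (k : ℕ)).im) ⬝ᵥ (bezoutMatrix ℝ m q1 q2) *ᵥ
        (fun l : Fin m => (z ^ (l : ℕ)).im)) = 0 := by
    rw [dot_gen, dot_gen, ← Finset.sum_add_distrib]
    have h3 : ∑ k : Fin m, (∑ l : Fin m,
          bezoutMatrix ℝ m q1 q2 k l * (z ^ (k : ℕ)).re * (z ^ (l : ℕ)).re +
        ∑ l : Fin m,
          bezoutMatrix ℝ m q1 q2 k l * (z ^ (k : ℕ)).im * (z ^ (l : ℕ)).im) =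
        ∑ k : Fin m, ∑ l : Fin m, bezoutMatrix ℝ m q1 q2 k l *
          ((z ^ (k : ℕ)).re * (z ^ (l : ℕ)).re + (z ^ (k : ℕ)).im * (z ^ (l : ℕ)).im) := by
      refine Finset.sum_congr rfl fun k _ => ?_
      rw [← Finset.sum_add_distrib]
      exact Finset.sum_congr rfl fun l _ => by ring
    rw [h3, ← hre]
  have hxne : (fun k : Fin m => (z ^ (k : ℕ)).re) ≠ 0 := by
    intro hcon
    have := congrFun hcon ⟨0, hm⟩
    simp at this
  rcases hdef with hd | hd
  · have hx0 := hd.dotProduct_mulVec_pos hxne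
    rw [star_trivial] at hx0
    have hy0 := hd.posSemidef.dotProduct_mulVec_nonneg (fun k : Fin m => (z ^ (k : ℕ)).im)
    rw [star_trivial] at hy0
    linarith
  · have hx0 := hd.dotProduct_mulVec_pos hxne
    rw [star_trivial, Matrix.neg_mulVec, dotProduct_neg] at hx0
    have hy0 := hd.posSemidef.dotProduct_mulVec_nonneg (fun k : Fin m => (z ^ (k : ℕ)).im)
    rw [star_trivial, Matrix.neg_mulVec, dotProduct_neg] at hy0
    linarith

lemma roots_card_nodup (hm : 1 ≤ m) (hq1m : q1.natDegree = m) (hq2m : q2.natDegree = m)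
    (hdef : (bezoutMatrix ℝ m q1 q2).PosDef ∨ (-(bezoutMatrix ℝ m q1 q2)).PosDef)
    (p : Polynomial ℝ) (hp : p = q1 ∨ p = q2) :
    p.roots.card = m ∧ p.roots.Nodup := by
  have hq1le : q1.natDegree ≤ m := hq1m.le
  have hq2le : q2.natDegree ≤ m := hq2m.le
  set f := algebraMap ℝ ℂ with hf
  have hp0 : p ≠ 0 := by
    intro h
    rcases hp with rfl | rfl <;> (rw [h] at *; simp [natDegree_zero] at *; omega)
  set P := p.map f with hP
  have hP0 : P ≠ 0 := by
    rw [hP, hf]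
    exact Polynomial.map_ne_zero hp0
  have hPdeg : P.natDegree = p.natDegree := natDegree_map f
  have hpm : p.natDegree = m := by rcases hp with rfl | rfl <;> assumption
  have hcardC : P.roots.card = m := by
    have h1 := IsAlgClosed.card_roots_eq_natDegree (p := p.map f)
    show Multiset.card (p.map f).roots = m
    rw [h1, natDegree_map f, hpm]
  have him : ∀ z ∈ P.roots, z.im = 0 := by
    intro z hz
    have hz0 : P.eval z = 0 := (mem_roots hP0).mp hz
    have hzc : P.eval ((starRingEnd ℂ) z) = 0 := by
      rw [hP, hf, conj_eval_map, ← hf, ← hP, hz0, map_zero]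
    refine im_eq_zero hm hq1le hq2le hdef z ?_
    rcases hp with rfl | rfl
    · rw [← hf, ← hP, hz0, hzc, zero_mul, zero_mul, sub_zero]
    · rw [← hf, ← hP, hz0, hzc, mul_zero, mul_zero, sub_zero]
  have hmult : ∀ z : ℂ, rootMultiplicity z P ≤ 1 := by
    intro z
    by_contra hcon
    push_neg at hcon
    have h2 : 2 ≤ rootMultiplicity z P := hcon
    have hzroot : P.IsRoot z := (rootMultiplicity_pos hP0).mp (by omega)
    have hzim : z.im = 0 := him z ((mem_roots hP0).mpr hzroot)
    have hzb : ((z.re : ℂ)) = z := Complex.ext (by simp) (by simp [hzim])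
    set b := z.re with hb
    have hdvd : (X - C z) ^ 2 ∣ P :=
      dvd_trans (pow_dvd_pow _ h2) (pow_rootMultiplicity_dvd P z)
    obtain ⟨r, hr⟩ := hdvd
    have hpe : p.eval b = 0 := by
      have : f (p.eval b) = P.eval z := by
        rw [← hzb, hP, eval_map, show ((b:ℂ)) = f b by rw [hf, Complex.coe_algebraMap],
          eval₂_at_apply]
      rw [hzroot] at this
      exact (_root_.map_eq_zero f).mp this
    have hpe' : p.derivative.eval b = 0 := by
      have hD : (derivative P).eval z = 0 := by
        rw [hr, derivative_mul, derivative_pow]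
        simp
      have : f (p.derivative.eval b) = (derivative P).eval z := by
        rw [hP, derivative_map, ← hzb, eval_map,
          show ((b:ℂ)) = f b by rw [hf, Complex.coe_algebraMap], eval₂_at_apply]
      rw [hD] at this
      exact (_root_.map_eq_zero f).mp this
    have hDq : Dq q1 q2 b = 0 := by
      rcases hp with rfl | rfl <;> simp [Dq, hpe, hpe']
    exact diag_ne_zero hm hq1le hq2le hdef b hDq
  have hnodupC : P.roots.Nodup := Multiset.nodup_iff_count_le_one.mpr fun z => by
    rw [count_roots]
    exact hmult z
  have hTcard : P.roots.toFinset.card = m := by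
    rw [Multiset.toFinset_card_eq_card_iff_nodup.mpr hnodupC, hcardC]
  have hinj : m ≤ p.roots.toFinset.card := by
    rw [← hTcard]
    refine Finset.card_le_card_of_injOn (fun z => z.re) ?_ ?_
    · intro z hz
      rw [Finset.mem_coe, Multiset.mem_toFinset] at hz ⊢
      have hz0 : P.eval z = 0 := (mem_roots hP0).mp hz
      have hzb : ((z.re : ℂ)) = z := Complex.ext (by simp) (by simp [him z hz])
      rw [mem_roots hp0]
      show p.eval z.re = 0
      have : f (p.eval z.re) = P.eval z := by
        conv_rhs => rw [← hzb]
        rw [hP, eval_map, show ((z.re:ℂ)) = f z.re by rw [hf, Complex.coe_algebraMap],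
          eval₂_at_apply]
      rw [hz0] at this
      exact (_root_.map_eq_zero f).mp this
    · intro z hz w hw hzw
      rw [Finset.mem_coe, Multiset.mem_toFinset] at hz hw
      exact Complex.ext hzw (by rw [him z hz, him w hw])
  have hcard : p.roots.card = m := by
    have h1 : p.roots.toFinset.card ≤ p.roots.card := Multiset.toFinset_card_le _
    have h2 : p.roots.card ≤ p.natDegree := p.card_roots'
    omega
  refine ⟨hcard, Multiset.nodup_iff_count_le_one.mpr fun b => ?_⟩
  rw [count_roots]
  have hdvd : ((X : Polynomial ℝ) - C b) ^ (rootMultiplicity b p) ∣ p :=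
    pow_rootMultiplicity_dvd p b
  have hdvd2 : ((X : Polynomial ℂ) - C (f b)) ^ (rootMultiplicity b p) ∣ P := by
    have := Polynomial.map_dvd f hdvd
    simpa [Polynomial.map_pow] using this
  have := (le_rootMultiplicity_iff hP0).mpr hdvd2
  exact this.trans (hmult (f b))

lemma exists_enum {p : Polynomial ℝ} (hm : 1 ≤ m) (hcard : p.roots.card = m)
    (hnodup : p.roots.Nodup) :
    ∃ a : Fin m → ℝ, StrictMono a ∧ (∀ i, p.IsRoot (a i)) ∧ ∀ x, p.IsRoot x → ∃ i, a i = x := by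
  have hp0 : p ≠ 0 := by
    intro h
    rw [h, roots_zero] at hcard
    simp at hcard
    omega
  have hs : p.roots.toFinset.card = m := by
    rw [Multiset.toFinset_card_eq_card_iff_nodup.mpr hnodup, hcard]
  let e := p.roots.toFinset.orderIsoOfFin hs
  refine ⟨fun i => (e i : ℝ), ?_, ?_, ?_⟩
  · intro i j hij
    exact Subtype.coe_lt_coe.mpr (e.strictMono hij)
  · intro i
    have h1 := (e i).2
    rw [Multiset.mem_toFinset] at h1
    exact isRoot_of_mem_roots h1
  · intro x hx
    have hx' : x ∈ p.roots.toFinset := by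
      rw [Multiset.mem_toFinset, mem_roots hp0]
      exact hx
    exact ⟨e.symm ⟨x, hx'⟩, by simp⟩

lemma roots_eq_map {p : Polynomial ℝ} (hp0 : p ≠ 0) (hcard : p.roots.card = m)
    (a : Fin m → ℝ) (ha : StrictMono a) (hroot : ∀ i, p.IsRoot (a i)) :
    p.roots = Multiset.map a Finset.univ.val := by
  have hnodupm : (Multiset.map a Finset.univ.val).Nodup :=
    Multiset.Nodup.map ha.injective Finset.univ.nodup
  have hle : Multiset.map a Finset.univ.val ≤ p.roots := by
    rw [Multiset.le_iff_count]
    intro x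
    by_cases hx : x ∈ Multiset.map a Finset.univ.val
    · have h1 : (Multiset.map a Finset.univ.val).count x ≤ 1 :=
        Multiset.nodup_iff_count_le_one.mp hnodupm x
      have h2 : 1 ≤ p.roots.count x := by
        rw [Multiset.one_le_count_iff_mem]
        obtain ⟨i, _, rfl⟩ := Multiset.mem_map.mp hx
        rw [mem_roots hp0]
        exact hroot i
      omega
    · rw [Multiset.count_eq_zero_of_notMem hx]
      exact Nat.zero_le _
  refine (Multiset.eq_of_le_of_card_le hle ?_).symm
  rw [hcard]
  simp

lemma factored {p : Polynomial ℝ} (hp0 : p ≠ 0) (hdeg : p.natDegree = m)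
    (hcard : p.roots.card = m)
    (a : Fin m → ℝ) (ha : StrictMono a) (hroot : ∀ i, p.IsRoot (a i)) :
    p = C p.leadingCoeff * ∏ i : Fin m, (X - C (a i)) := by
  have h1 := C_leadingCoeff_mul_prod_multiset_X_sub_C (p := p) (by rw [hcard, hdeg])
  rw [roots_eq_map hp0 hcard a ha hroot, Multiset.map_map] at h1
  conv_lhs => rw [← h1]
  rfl

lemma eval_factored {p : Polynomial ℝ} (hp0 : p ≠ 0) (hdeg : p.natDegree = m)
    (hcard : p.roots.card = m)
    (a : Fin m → ℝ) (ha : StrictMono a) (hroot : ∀ i, p.IsRoot (a i)) (x : ℝ) :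
    p.eval x = p.leadingCoeff * ∏ i : Fin m, (x - a i) := by
  conv_lhs => rw [factored hp0 hdeg hcard a ha hroot]
  rw [eval_mul, eval_C, eval_prod]
  simp

lemma deriv_eval {p : Polynomial ℝ} (hp0 : p ≠ 0) (hdeg : p.natDegree = m)
    (hcard : p.roots.card = m)
    (a : Fin m → ℝ) (ha : StrictMono a) (hroot : ∀ i, p.IsRoot (a i)) (j : Fin m) :
    p.derivative.eval (a j) =
      p.leadingCoeff * ∏ i ∈ Finset.univ.erase j, (a j - a i) := by
  have h2 : p = (X - C (a j)) *
      (C p.leadingCoeff * ∏ i ∈ Finset.univ.erase j, (X - C (a i))) := by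
    conv_lhs => rw [factored hp0 hdeg hcard a ha hroot]
    rw [← Finset.mul_prod_erase Finset.univ _ (Finset.mem_univ j)]
    ring
  have h3 := congrArg Polynomial.derivative h2
  rw [derivative_mul, derivative_sub, derivative_X, derivative_C, sub_zero] at h3
  have h4 := congrArg (Polynomial.eval (a j)) h3
  simp only [eval_add, eval_mul, eval_one, eval_sub, eval_X, eval_C, eval_prod,
    sub_self, zero_mul, one_mul, add_zero, mul_zero] at h4
  exact h4

section Signs

variable {m : ℕ}

/-- Products of differences at consecutive points of a strictly monotone family
have opposite signs. -/
lemma consec_neg (a : Fin m → ℝ) (ha : StrictMono a) (i : Fin m) (h : (i : ℕ) + 1 < m) :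
    (∏ k ∈ Finset.univ.erase i, (a i - a k)) *
      (∏ k ∈ Finset.univ.erase ⟨(i : ℕ) + 1, h⟩, (a ⟨(i : ℕ) + 1, h⟩ - a k)) < 0 := by
  set i' : Fin m := ⟨(i : ℕ) + 1, h⟩ with hi'def
  have hii' : i < i' := by simp [hi'def, Fin.lt_def]
  have hne : i ≠ i' := ne_of_lt hii'
  set s : Finset (Fin m) := (Finset.univ.erase i).erase i' with hs
  have hi'mem : i' ∈ Finset.univ.erase i := by
    simp [Finset.mem_erase, hne.symm]
  have himem : i ∈ Finset.univ.erase i' := by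
    simp [Finset.mem_erase, hne]
  have h1 : ∏ k ∈ Finset.univ.erase i, (a i - a k) =
      (a i - a i') * ∏ k ∈ s, (a i - a k) :=
    (Finset.mul_prod_erase _ _ hi'mem).symm
  have herase : (Finset.univ.erase i').erase i = s := by
    rw [hs]
    ext k
    simp only [Finset.mem_erase, Finset.mem_univ, and_true]
    tauto
  have h2 : ∏ k ∈ Finset.univ.erase i', (a i' - a k) =
      (a i' - a i) * ∏ k ∈ s, (a i' - a k) := by
    rw [← Finset.mul_prod_erase _ _ himem, herase]
  have hP : 0 < ∏ k ∈ s, ((a i - a k) * (a i' - a k)) := by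
    refine Finset.prod_pos fun k hk => ?_
    rw [hs, Finset.mem_erase, Finset.mem_erase] at hk
    have hki' : k ≠ i' := hk.1
    have hki : k ≠ i := hk.2.1
    rcases lt_or_gt_of_ne hki with hlt | hgt
    · have h3 : a k < a i := ha hlt
      have h4 : a k < a i' := ha (lt_trans hlt hii')
      exact mul_pos (by linarith) (by linarith)
    · have h5 : (i : ℕ) < (k : ℕ) := hgt
      have h7 : (k : ℕ) ≠ (i : ℕ) + 1 := fun hc => hki' (Fin.ext hc)
      have hk3 : i' < k := by
        rw [Fin.lt_def]
        show (i : ℕ) + 1 < (k : ℕ)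
        omega
      have h3 : a i < a k := ha hgt
      have h4 : a i' < a k := ha hk3
      exact mul_pos_of_neg_of_neg (by linarith) (by linarith)
  have hprod : (∏ k ∈ s, (a i - a k)) * ∏ k ∈ s, (a i' - a k) =
      ∏ k ∈ s, ((a i - a k) * (a i' - a k)) := (Finset.prod_mul_distrib).symm
  have haii' : a i < a i' := ha hii'
  have goal_eq : (∏ k ∈ Finset.univ.erase i, (a i - a k)) *
      (∏ k ∈ Finset.univ.erase i', (a i' - a k)) =
      ((a i - a i') * (a i' - a i)) * ∏ k ∈ s, ((a i - a k) * (a i' - a k)) := by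
    rw [h1, h2, ← hprod]
    ring
  rw [goal_eq]
  apply mul_neg_of_neg_of_pos _ hP
  nlinarith [haii', sq_nonneg (a i' - a i)]

/-- Splitting a full product at index `j`. -/
lemma prod_split_le (j : Fin m) (f : Fin m → ℝ) :
    (∏ i : Fin m, f i) =
      (∏ i ∈ Finset.univ.filter (fun i => i ≤ j), f i) *
        ∏ i ∈ Finset.univ.filter (fun i => j < i), f i := by
  rw [← Finset.prod_filter_mul_prod_filter_not Finset.univ (fun i => i ≤ j)]
  congr 1
  apply Finset.prod_congr _ fun _ _ => rfl
  ext i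
  simp [not_le]

lemma prod_split_lt (j : Fin m) (f : Fin m → ℝ) :
    (∏ i : Fin m, f i) =
      (∏ i ∈ Finset.univ.filter (fun i => i < j), f i) *
        ∏ i ∈ Finset.univ.filter (fun i => j ≤ i), f i := by
  rw [← Finset.prod_filter_mul_prod_filter_not Finset.univ (fun i => i < j)]
  congr 1
  apply Finset.prod_congr _ fun _ _ => rfl
  ext i
  simp [not_lt]

lemma prod_erase_split (j : Fin m) (f : Fin m → ℝ) :
    (∏ i ∈ Finset.univ.erase j, f i) =
      (∏ i ∈ Finset.univ.filter (fun i => i < j), f i) *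
        ∏ i ∈ Finset.univ.filter (fun i => j < i), f i := by
  rw [← Finset.prod_filter_mul_prod_filter_not (Finset.univ.erase j) (fun i => i < j)]
  congr 1
  · apply Finset.prod_congr _ fun _ _ => rfl
    ext i
    simp only [Finset.mem_filter, Finset.mem_erase, Finset.mem_univ, true_and, and_true,
      not_lt, Ne, Fin.ext_iff, Fin.lt_def, Fin.le_def]
    omega
  · apply Finset.prod_congr _ fun _ _ => rfl
    ext i
    simp only [Finset.mem_filter, Finset.mem_erase, Finset.mem_univ, true_and, and_true,
      not_lt, Ne, Fin.ext_iff, Fin.lt_def, Fin.le_def]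
    omega

lemma pat1_pos (a b : Fin m → ℝ) (ha : StrictMono a) (hb : StrictMono b)
    (hpat : ∀ i : Fin m, a i < b i ∧ ∀ h : (i : ℕ) + 1 < m, b i < a ⟨(i : ℕ) + 1, h⟩)
    (j : Fin m) :
    0 < (∏ i : Fin m, (b j - a i)) * ∏ i ∈ Finset.univ.erase j, (b j - b i) := by
  rw [prod_split_le j, prod_erase_split j]
  have hP1 : 0 < ∏ i ∈ Finset.univ.filter (fun i => i ≤ j), (b j - a i) := by
    refine Finset.prod_pos fun i hi => ?_
    rw [Finset.mem_filter] at hi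
    have h1 : a i ≤ a j := ha.monotone hi.2
    have h2 : a j < b j := (hpat j).1
    linarith
  have hQ1 : 0 < ∏ i ∈ Finset.univ.filter (fun i => i < j), (b j - b i) := by
    refine Finset.prod_pos fun i hi => ?_
    rw [Finset.mem_filter] at hi
    have := hb hi.2
    linarith
  have hcomb : 0 < ∏ i ∈ Finset.univ.filter (fun i => j < i),
      ((b j - a i) * (b j - b i)) := by
    refine Finset.prod_pos fun i hi => ?_
    rw [Finset.mem_filter] at hi
    have hji : j < i := hi.2
    have hjm : (j : ℕ) + 1 < m := by
      have h1 : (j : ℕ) < (i : ℕ) := hji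
      have h2 : (i : ℕ) < m := i.2
      omega
    have h3 : b j < a ⟨(j : ℕ) + 1, hjm⟩ := (hpat j).2 hjm
    have h4 : a ⟨(j : ℕ) + 1, hjm⟩ ≤ a i := by
      refine ha.monotone ?_
      rw [Fin.le_def]
      exact hji
    have h5 : b j < b i := hb hji
    exact mul_pos_of_neg_of_neg (by linarith) (by linarith)
  have hmerge : (∏ i ∈ Finset.univ.filter (fun i => j < i), (b j - a i)) *
      ∏ i ∈ Finset.univ.filter (fun i => j < i), (b j - b i) =
      ∏ i ∈ Finset.univ.filter (fun i => j < i), ((b j - a i) * (b j - b i)) :=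
    Finset.prod_mul_distrib.symm
  have heq : (∏ i ∈ Finset.univ.filter (fun i => i ≤ j), (b j - a i)) *
        (∏ i ∈ Finset.univ.filter (fun i => j < i), (b j - a i)) *
      ((∏ i ∈ Finset.univ.filter (fun i => i < j), (b j - b i)) *
        ∏ i ∈ Finset.univ.filter (fun i => j < i), (b j - b i)) =
      ((∏ i ∈ Finset.univ.filter (fun i => i ≤ j), (b j - a i)) *
        (∏ i ∈ Finset.univ.filter (fun i => i < j), (b j - b i))) *
      ∏ i ∈ Finset.univ.filter (fun i => j < i), ((b j - a i) * (b j - b i)) := by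
    rw [← hmerge]
    ring
  rw [heq]
  exact mul_pos (mul_pos hP1 hQ1) hcomb

lemma pat2_neg (a b : Fin m → ℝ) (ha : StrictMono a) (hb : StrictMono b)
    (hpat : ∀ i : Fin m, b i < a i ∧ ∀ h : (i : ℕ) + 1 < m, a i < b ⟨(i : ℕ) + 1, h⟩)
    (j : Fin m) :
    (∏ i : Fin m, (b j - a i)) * ∏ i ∈ Finset.univ.erase j, (b j - b i) < 0 := by
  rw [prod_split_lt j, prod_erase_split j]
  have hjmem : j ∈ Finset.univ.filter (fun i => j ≤ i) := by
    simp
  have herase : (Finset.univ.filter (fun i : Fin m => j ≤ i)).erase j =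
      Finset.univ.filter (fun i => j < i) := by
    ext i
    simp only [Finset.mem_erase, Finset.mem_filter, Finset.mem_univ, true_and, and_true,
      Ne, Fin.ext_iff, Fin.le_def, Fin.lt_def]
    omega
  have hsplit : ∏ i ∈ Finset.univ.filter (fun i => j ≤ i), (b j - a i) =
      (b j - a j) * ∏ i ∈ Finset.univ.filter (fun i => j < i), (b j - a i) := by
    rw [← Finset.mul_prod_erase _ _ hjmem, herase]
  rw [hsplit]
  have hR1 : 0 < ∏ i ∈ Finset.univ.filter (fun i => i < j), (b j - a i) := by
    refine Finset.prod_pos fun i hi => ?_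
    rw [Finset.mem_filter] at hi
    have hij : i < j := hi.2
    have him : (i : ℕ) + 1 < m := by
      have h1 : (i : ℕ) < (j : ℕ) := hij
      have h2 : (j : ℕ) < m := j.2
      omega
    have h3 : a i < b ⟨(i : ℕ) + 1, him⟩ := (hpat i).2 him
    have h4 : b ⟨(i : ℕ) + 1, him⟩ ≤ b j := by
      refine hb.monotone ?_
      rw [Fin.le_def]
      exact hij
    linarith
  have hQ1 : 0 < ∏ i ∈ Finset.univ.filter (fun i => i < j), (b j - b i) := by
    refine Finset.prod_pos fun i hi => ?_
    rw [Finset.mem_filter] at hi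
    have := hb hi.2
    linarith
  have hcomb : 0 < ∏ i ∈ Finset.univ.filter (fun i => j < i),
      ((b j - a i) * (b j - b i)) := by
    refine Finset.prod_pos fun i hi => ?_
    rw [Finset.mem_filter] at hi
    have hji : j < i := hi.2
    have h5 : b j < b i := hb hji
    have h6 : b i < a i := (hpat i).1
    exact mul_pos_of_neg_of_neg (by linarith) (by linarith)
  have hneg : b j - a j < 0 := by
    have := (hpat j).1
    linarith
  have hmerge : (∏ i ∈ Finset.univ.filter (fun i => j < i), (b j - a i)) *
      ∏ i ∈ Finset.univ.filter (fun i => j < i), (b j - b i) =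
      ∏ i ∈ Finset.univ.filter (fun i => j < i), ((b j - a i) * (b j - b i)) :=
    Finset.prod_mul_distrib.symm
  have heq : (∏ i ∈ Finset.univ.filter (fun i => i < j), (b j - a i)) *
        ((b j - a j) * ∏ i ∈ Finset.univ.filter (fun i => j < i), (b j - a i)) *
      ((∏ i ∈ Finset.univ.filter (fun i => i < j), (b j - b i)) *
        ∏ i ∈ Finset.univ.filter (fun i => j < i), (b j - b i)) =
      (b j - a j) *
      (((∏ i ∈ Finset.univ.filter (fun i => i < j), (b j - a i)) *
        (∏ i ∈ Finset.univ.filter (fun i => i < j), (b j - b i))) *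
      ∏ i ∈ Finset.univ.filter (fun i => j < i), ((b j - a i) * (b j - b i))) := by
    rw [← hmerge]
    ring
  rw [heq]
  exact mul_neg_of_neg_of_pos hneg (mul_pos (mul_pos hR1 hQ1) hcomb)

end Signs

lemma forward_dir (hm : 1 ≤ m) (hq1m : q1.natDegree = m) (hq2m : q2.natDegree = m)
    (hc1 : q1.roots.card = m) (hc2 : q2.roots.card = m)
    (a b : Fin m → ℝ) (ha : StrictMono a) (hb : StrictMono b)
    (haroot : ∀ i, q1.IsRoot (a i)) (hbroot : ∀ i, q2.IsRoot (b i))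
    (hpat : (∀ i : Fin m, a i < b i ∧ ∀ h : (i : ℕ) + 1 < m, b i < a ⟨(i : ℕ) + 1, h⟩) ∨
      (∀ i : Fin m, b i < a i ∧ ∀ h : (i : ℕ) + 1 < m, a i < b ⟨(i : ℕ) + 1, h⟩)) :
    (bezoutMatrix ℝ m q1 q2).PosDef ∨ (-(bezoutMatrix ℝ m q1 q2)).PosDef := by
  have hq10 : q1 ≠ 0 := fun h => by rw [h, natDegree_zero] at hq1m; omega
  have hq20 : q2 ≠ 0 := fun h => by rw [h, natDegree_zero] at hq2m; omega
  set d : Fin m → ℝ := fun j => -(q1.eval (b j) * q2.derivative.eval (b j)) with hd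
  have hentry : ∀ i j : Fin m,
      (Matrix.vandermonde b * bezoutMatrix ℝ m q1 q2 * (Matrix.vandermonde b)ᵀ) i j =
      ∑ k : Fin m, ∑ l : Fin m,
        bezoutMatrix ℝ m q1 q2 k l * (b i) ^ (k : ℕ) * (b j) ^ (l : ℕ) := by
    intro i j
    simp only [Matrix.mul_apply, Matrix.transpose_apply, Matrix.vandermonde_apply,
      Finset.sum_mul]
    rw [Finset.sum_comm]
    exact Finset.sum_congr rfl fun k _ => Finset.sum_congr rfl fun l _ => by ring
  have hdiagm : Matrix.vandermonde b * bezoutMatrix ℝ m q1 q2 * (Matrix.vandermonde b)ᵀ =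
      Matrix.diagonal d := by
    ext i j
    rcases eq_or_ne i j with rfl | hij
    · rw [hentry, Matrix.diagonal_apply_eq, diagform hm hq1m.le hq2m.le (b i),
        show q2.eval (b i) = 0 from hbroot i, mul_zero, zero_sub, hd]
    · rw [hentry, Matrix.diagonal_apply_ne _ hij]
      have hq := quadform hm hq1m.le hq2m.le (b i) (b j)
      rw [show q2.eval (b j) = 0 from hbroot j, show q2.eval (b i) = 0 from hbroot i,
        mul_zero, mul_zero, sub_zero] at hq
      have hbne : b i - b j ≠ 0 := sub_ne_zero.mpr (fun hh => hij (hb.injective hh))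
      rcases mul_eq_zero.mp hq with h0 | h0
      · exact h0
      · exact absurd h0 hbne
  have hdet : IsUnit (Matrix.vandermonde b).det :=
    (Matrix.det_vandermonde_ne_zero_iff.mpr hb.injective).isUnit
  have heval1 : ∀ j, q1.eval (b j) = q1.leadingCoeff * ∏ i : Fin m, (b j - a i) :=
    fun j => eval_factored hq10 hq1m hc1 a ha haroot (b j)
  have heval2 : ∀ j, q2.derivative.eval (b j) =
      q2.leadingCoeff * ∏ i ∈ Finset.univ.erase j, (b j - b i) :=
    fun j => deriv_eval hq20 hq2m hc2 b hb hbroot j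
  have hc0 : q1.leadingCoeff * q2.leadingCoeff ≠ 0 :=
    mul_ne_zero (leadingCoeff_ne_zero.mpr hq10) (leadingCoeff_ne_zero.mpr hq20)
  have hdval : ∀ j, d j = -((q1.leadingCoeff * q2.leadingCoeff) *
      ((∏ i : Fin m, (b j - a i)) * ∏ i ∈ Finset.univ.erase j, (b j - b i))) := by
    intro j
    rw [hd]
    simp only []
    rw [heval1 j, heval2 j]
    ring
  have hsign : (∀ j, 0 < d j) ∨ (∀ j, d j < 0) := by
    rcases hpat with hp1 | hp2
    · rcases lt_or_gt_of_ne hc0 with hcneg | hcpos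
      · left
        intro j
        rw [hdval j]
        have := pat1_pos a b ha hb hp1 j
        nlinarith
      · right
        intro j
        rw [hdval j]
        have := pat1_pos a b ha hb hp1 j
        nlinarith
    · rcases lt_or_gt_of_ne hc0 with hcneg | hcpos
      · right
        intro j
        rw [hdval j]
        have := pat2_neg a b ha hb hp2 j
        nlinarith
      · left
        intro j
        rw [hdval j]
        have := pat2_neg a b ha hb hp2 j
        nlinarith
  rcases hsign with hpos | hneg
  · left
    refine posdef_of_mul_mul_transpose hdet ?_ bez_isHermitian
    rw [hdiagm]
    exact Matrix.PosDef.diagonal hpos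
  · right
    refine posdef_of_mul_mul_transpose hdet ?_ neg_bez_isHermitian
    have hneg2 : Matrix.vandermonde b * (-(bezoutMatrix ℝ m q1 q2)) *
        (Matrix.vandermonde b)ᵀ = Matrix.diagonal (fun j => -(d j)) := by
      rw [Matrix.mul_neg, Matrix.neg_mul, hdiagm]
      ext i j
      rcases eq_or_ne i j with rfl | hij
      · simp
      · simp [Matrix.diagonal_apply_ne _ hij]
    rw [hneg2]
    exact Matrix.PosDef.diagonal fun j => by have := hneg j; linarith

lemma root_between {p : Polynomial ℝ} {x y : ℝ} (hxy : x < y)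
    (hsign : p.eval x * p.eval y < 0) : ∃ z, x < z ∧ z < y ∧ p.IsRoot z := by
  have hcont : ContinuousOn (fun t => p.eval t) (Set.Icc x y) :=
    (Polynomial.continuous p).continuousOn
  rcases lt_or_ge (p.eval x) 0 with hx | hx
  · have hy : 0 < p.eval y := by nlinarith
    have h0 : (0 : ℝ) ∈ Set.Ioo (p.eval x) (p.eval y) := ⟨hx, hy⟩
    obtain ⟨z, hz, hz0⟩ := intermediate_value_Ioo hxy.le hcont h0
    exact ⟨z, hz.1, hz.2, hz0⟩
  · have hx' : 0 < p.eval x := by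
      rcases lt_or_eq_of_le hx with h | h
      · exact h
      · exfalso; rw [← h] at hsign; simp at hsign
    have hy : p.eval y < 0 := by nlinarith
    have h0 : (0 : ℝ) ∈ Set.Ioo (p.eval y) (p.eval x) := ⟨hy, hx'⟩
    obtain ⟨z, hz, hz0⟩ := intermediate_value_Ioo' hxy.le hcont h0
    exact ⟨z, hz.1, hz.2, hz0⟩

lemma interlace_count (hm : 1 ≤ m) (a b : Fin m → ℝ) (ha : StrictMono a)
    (hb : StrictMono b) (hne : ∀ i j, a i ≠ b j)
    (hmid : ∀ i : Fin m, ∀ h : (i : ℕ) + 1 < m,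
      ∃ j, a i < b j ∧ b j < a ⟨(i : ℕ) + 1, h⟩)
    (h0 : b ⟨0, hm⟩ < a ⟨0, hm⟩) :
    ∀ i : Fin m, b i < a i ∧ ∀ h : (i : ℕ) + 1 < m, a i < b ⟨(i : ℕ) + 1, h⟩ := by
  set N : Fin m → ℕ := fun i => (Finset.univ.filter (fun j => b j < a i)).card with hN
  have hstep : ∀ (i : Fin m) (h : (i : ℕ) + 1 < m), N i < N ⟨(i : ℕ) + 1, h⟩ := by
    intro i h
    obtain ⟨j0, hj1, hj2⟩ := hmid i h
    apply Finset.card_lt_card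
    constructor
    · intro j hj
      rw [Finset.mem_filter] at hj ⊢
      refine ⟨hj.1, lt_trans hj.2 (ha ?_)⟩
      simp [Fin.lt_def]
    · intro hcon
      have hj0 : j0 ∈ Finset.univ.filter (fun j => b j < a ⟨(i : ℕ) + 1, h⟩) := by
        rw [Finset.mem_filter]
        exact ⟨Finset.mem_univ _, hj2⟩
      have := hcon hj0
      rw [Finset.mem_filter] at this
      exact absurd this.2 (not_lt.mpr hj1.le)
  have hlow : ∀ (n : ℕ) (hn : n < m), n + 1 ≤ N ⟨n, hn⟩ := by
    intro n
    induction n with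
    | zero =>
      intro hn
      have hmem : (⟨0, hn⟩ : Fin m) ∈ Finset.univ.filter
          (fun j => b j < a ⟨0, hn⟩) := by
        rw [Finset.mem_filter]
        exact ⟨Finset.mem_univ _, h0⟩
      exact Finset.card_pos.mpr ⟨_, hmem⟩
    | succ n ih =>
      intro hn
      have h1 : n < m := by omega
      have h2 := hstep ⟨n, h1⟩ (by simpa using hn)
      have h3 := ih h1
      have h4 : N ⟨(n : ℕ) + 1, hn⟩ = N ⟨((⟨n, h1⟩ : Fin m) : ℕ) + 1, by simpa using hn⟩ :=
        rfl
      omega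
  have haux : ∀ (d n : ℕ) (hn : n < m), n + d = m - 1 → N ⟨n, hn⟩ + d ≤ m := by
    intro d
    induction d with
    | zero =>
      intro n hn _
      have h1 : N ⟨n, hn⟩ ≤ m := by
        refine le_trans (Finset.card_filter_le _ _) ?_
        simp
      omega
    | succ d ih =>
      intro n hn hsum
      have hn1 : n + 1 < m := by omega
      have h2 := hstep ⟨n, hn⟩ (by simpa using hn1)
      have h3 := ih (n + 1) hn1 (by omega)
      have h4 : N ⟨(n : ℕ) + 1, hn1⟩ = N ⟨((⟨n, hn⟩ : Fin m) : ℕ) + 1, by simpa using hn1⟩ :=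
        rfl
      omega
  have hupp : ∀ (n : ℕ) (hn : n < m), N ⟨n, hn⟩ ≤ n + 1 := by
    intro n hn
    have := haux (m - 1 - n) n hn (by omega)
    omega
  intro i
  have hloweta : (i : ℕ) + 1 ≤ N i := by
    have := hlow (i : ℕ) i.2
    simpa using this
  have huppeta : N i ≤ (i : ℕ) + 1 := by
    have := hupp (i : ℕ) i.2
    simpa using this
  constructor
  · by_contra hcon
    push_neg at hcon
    have hlt : a i < b i := lt_of_le_of_ne hcon (hne i i)
    have hsub : Finset.univ.filter (fun j => b j < a i) ⊆
        Finset.univ.filter (fun j : Fin m => j < i) := by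
      intro j hj
      rw [Finset.mem_filter] at hj ⊢
      refine ⟨hj.1, ?_⟩
      have hbb : b j < b i := lt_trans hj.2 hlt
      exact hb.lt_iff_lt.mp hbb
    have hcard1 : N i ≤ (Finset.univ.filter (fun j : Fin m => j < i)).card :=
      Finset.card_le_card hsub
    have hcard2 : (Finset.univ.filter (fun j : Fin m => j < i)).card ≤ (i : ℕ) := by
      have hinj := Finset.card_le_card_of_injOn (f := fun j : Fin m => (j : ℕ))
        (s := Finset.univ.filter (fun j : Fin m => j < i)) (t := Finset.range (i : ℕ))
        (fun j hj => by
          rw [Finset.mem_coe, Finset.mem_filter] at hj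
          rw [Finset.mem_coe, Finset.mem_range]
          exact hj.2)
        (fun u _ v _ hh => Fin.ext hh)
      simpa using hinj
    omega
  · intro h
    by_contra hcon
    push_neg at hcon
    have hlt : b ⟨(i : ℕ) + 1, h⟩ < a i :=
      lt_of_le_of_ne hcon fun hh => hne i ⟨(i : ℕ) + 1, h⟩ hh.symm
    have hcard : (i : ℕ) + 2 ≤ N i := by
      have hmap : ∀ n : Fin ((i : ℕ) + 2), (n : ℕ) < m := fun n => by
        have := n.2
        omega
      have hinj := Finset.card_le_card_of_injOn
        (f := fun n : Fin ((i : ℕ) + 2) => (⟨(n : ℕ), hmap n⟩ : Fin m))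
        (s := Finset.univ) (t := Finset.univ.filter (fun j => b j < a i))
        (fun n _ => by
          rw [Finset.mem_coe, Finset.mem_filter]
          refine ⟨Finset.mem_univ _, ?_⟩
          have h6 : (⟨(n : ℕ), hmap n⟩ : Fin m) ≤ ⟨(i : ℕ) + 1, h⟩ := by
            rw [Fin.mk_le_mk]
            have := n.2
            omega
          exact lt_of_le_of_lt (hb.monotone h6) hlt)
        (fun u _ v _ hh => Fin.ext (by simpa [Fin.mk.injEq] using hh))
      simpa using hinj
    omega

lemma reverse_dir (hm : 1 ≤ m) (hq1m : q1.natDegree = m) (hq2m : q2.natDegree = m)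
    (hdef : (bezoutMatrix ℝ m q1 q2).PosDef ∨ (-(bezoutMatrix ℝ m q1 q2)).PosDef) :
    q1.roots.card = m ∧ q1.roots.Nodup ∧ q2.roots.card = m ∧ q2.roots.Nodup ∧
      (∀ x : ℝ, ¬(q1.IsRoot x ∧ q2.IsRoot x)) ∧
      ∃ a b : Fin m → ℝ, StrictMono a ∧ StrictMono b ∧
        (∀ i, q1.IsRoot (a i)) ∧ (∀ i, q2.IsRoot (b i)) ∧
        ((∀ i : Fin m, a i < b i ∧ ∀ h : (i : ℕ) + 1 < m, b i < a ⟨(i : ℕ) + 1, h⟩) ∨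
         (∀ i : Fin m, b i < a i ∧ ∀ h : (i : ℕ) + 1 < m, a i < b ⟨(i : ℕ) + 1, h⟩)) := by
  have hq1le := hq1m.le
  have hq2le := hq2m.le
  have hq10 : q1 ≠ 0 := fun h => by rw [h, natDegree_zero] at hq1m; omega
  have hq20 : q2 ≠ 0 := fun h => by rw [h, natDegree_zero] at hq2m; omega
  obtain ⟨hc1, hn1⟩ := roots_card_nodup hm hq1m hq2m hdef q1 (Or.inl rfl)
  obtain ⟨hc2, hn2⟩ := roots_card_nodup hm hq1m hq2m hdef q2 (Or.inr rfl)
  obtain ⟨a, ha, haroot, hasurj⟩ := exists_enum hm hc1 hn1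
  obtain ⟨b, hb, hbroot, hbsurj⟩ := exists_enum hm hc2 hn2
  have hnc : ∀ x : ℝ, ¬(q1.IsRoot x ∧ q2.IsRoot x) := by
    rintro x ⟨h1, h2⟩
    have e1 : q1.eval x = 0 := h1
    have e2 : q2.eval x = 0 := h2
    exact diag_ne_zero hm hq1le hq2le hdef x (by simp [Dq, e1, e2])
  have hane : ∀ i j, a i ≠ b j := fun i j hh =>
    hnc (a i) ⟨haroot i, by rw [hh]; exact hbroot j⟩
  have hDa : ∀ i, Dq q1 q2 (a i) = q1.derivative.eval (a i) * q2.eval (a i) := by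
    intro i
    have e1 : q1.eval (a i) = 0 := haroot i
    simp [Dq, e1]
  have hDb : ∀ j, Dq q1 q2 (b j) = -(q1.eval (b j) * q2.derivative.eval (b j)) := by
    intro j
    have e2 : q2.eval (b j) = 0 := hbroot j
    simp [Dq, e2]
  have hmidb : ∀ i : Fin m, ∀ h : (i : ℕ) + 1 < m,
      ∃ j, a i < b j ∧ b j < a ⟨(i : ℕ) + 1, h⟩ := by
    intro i h
    set i' : Fin m := ⟨(i : ℕ) + 1, h⟩ with hi'
    have hii' : i < i' := by simp [hi', Fin.lt_def]
    have hder : q1.derivative.eval (a i) * q1.derivative.eval (a i') < 0 := by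
      rw [deriv_eval hq10 hq1m hc1 a ha haroot i, deriv_eval hq10 hq1m hc1 a ha haroot i']
      have hlc : q1.leadingCoeff ≠ 0 := leadingCoeff_ne_zero.mpr hq10
      have hcn := consec_neg a ha i h
      have hlc2 : 0 < q1.leadingCoeff ^ 2 := by positivity
      nlinarith
    have hDD := diag_mul_pos hm hq1le hq2le hdef (a i) (a i')
    rw [hDa i, hDa i'] at hDD
    have hq2sign : q2.eval (a i) * q2.eval (a i') < 0 := by nlinarith
    obtain ⟨z, hz1, hz2, hz3⟩ := root_between (ha hii') hq2sign
    obtain ⟨j, hj⟩ := hbsurj z hz3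
    exact ⟨j, by rw [hj]; exact hz1, by rw [hj]; exact hz2⟩
  have hmida : ∀ j : Fin m, ∀ h : (j : ℕ) + 1 < m,
      ∃ i, b j < a i ∧ a i < b ⟨(j : ℕ) + 1, h⟩ := by
    intro j h
    set j' : Fin m := ⟨(j : ℕ) + 1, h⟩ with hj'
    have hjj' : j < j' := by simp [hj', Fin.lt_def]
    have hder : q2.derivative.eval (b j) * q2.derivative.eval (b j') < 0 := by
      rw [deriv_eval hq20 hq2m hc2 b hb hbroot j, deriv_eval hq20 hq2m hc2 b hb hbroot j']
      have hlc : q2.leadingCoeff ≠ 0 := leadingCoeff_ne_zero.mpr hq20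
      have hcn := consec_neg b hb j h
      have hlc2 : 0 < q2.leadingCoeff ^ 2 := by positivity
      nlinarith
    have hDD := diag_mul_pos hm hq1le hq2le hdef (b j) (b j')
    rw [hDb j, hDb j'] at hDD
    have hq1sign : q1.eval (b j) * q1.eval (b j') < 0 := by nlinarith
    obtain ⟨z, hz1, hz2, hz3⟩ := root_between (hb hjj') hq1sign
    obtain ⟨i, hi⟩ := hasurj z hz3
    exact ⟨i, by rw [hi]; exact hz1, by rw [hi]; exact hz2⟩
  refine ⟨hc1, hn1, hc2, hn2, hnc, a, b, ha, hb, haroot, hbroot, ?_⟩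
  rcases lt_or_gt_of_ne (hane ⟨0, hm⟩ ⟨0, hm⟩) with h0 | h0
  · left
    exact interlace_count hm b a hb ha (fun i j => (hane j i).symm) hmida h0
  · right
    exact interlace_count hm a b ha hb hane hmidb h0

end Main

end RealPart

/-- Let `q1, q2 ∈ ℝ[u]` have degree exactly `m ≥ 1`. Then `B_m(q1,q2)`
is definite (positive or negative definite) iff all roots of `q1` and `q2` are real and
simple, `q1` and `q2` have no common root, and the roots strictly interlace (listed
together in increasing order they alternate between roots of `q1` and roots of `q2`). -/
theorem stmt13 (m : ℕ) (hm : 1 ≤ m) (q1 q2 : Polynomial ℝ)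
    (hq1 : q1.natDegree = m) (hq2 : q2.natDegree = m) :
    ((bezoutMatrix ℝ m q1 q2).PosDef ∨ (-(bezoutMatrix ℝ m q1 q2)).PosDef) ↔
      (q1.roots.card = m ∧ q1.roots.Nodup ∧
       q2.roots.card = m ∧ q2.roots.Nodup ∧
       (∀ x : ℝ, ¬ (q1.IsRoot x ∧ q2.IsRoot x)) ∧
       ∃ a b : Fin m → ℝ, StrictMono a ∧ StrictMono b ∧
         (∀ i, q1.IsRoot (a i)) ∧ (∀ i, q2.IsRoot (b i)) ∧
         ((∀ i : Fin m, a i < b i ∧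
            ∀ h : (i : ℕ) + 1 < m, b i < a ⟨(i : ℕ) + 1, h⟩) ∨
          (∀ i : Fin m, b i < a i ∧
            ∀ h : (i : ℕ) + 1 < m, a i < b ⟨(i : ℕ) + 1, h⟩))) := by
  constructor
  · intro hdef
    exact reverse_dir hm hq1 hq2 hdef
  · rintro ⟨hc1, hn1, hc2, hn2, -, a, b, ha, hb, haroot, hbroot, hpat⟩
    exact forward_dir hm hq1 hq2 hc1 hc2 a b ha hb haroot hbroot hpat
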